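/- If 1 < p₁ < p₂ < ∞, then Q_{p₁}(q) < Q_{p₂}(q) for every q ∈ (0, 1). -/

import Mathlib

open Real

/-- The complete `p`-elliptic integral of the first kind. -/
noncomputable def K1 (p q : ℝ) : ℝ :=
  ∫ z in (0:ℝ)..1, (1 - q ^ 2 * z ^ 2) ^ (-(1/2) : ℝ) * (1 - z ^ 2) ^ (-(1 / p))

/-- The complete `p`-elliptic integral of the second kind. -/
noncomputable def E1 (p q : ℝ) : ℝ :=
  ∫ z in (0:ℝ)..1, (1 - q ^ 2 * z ^ 2) ^ ((1/2) : ℝ) * (1 - z ^ 2) ^ (-(1 / p))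

/-- The ratio function `Q_p`. -/
noncomputable def Qp (p q : ℝ) : ℝ := 2 * E1 p q / K1 p q - 1

open MeasureTheory Set

/-- Auxiliary weight: the integrand of `K1`. -/
noncomputable def QpW (p q z : ℝ) : ℝ :=
  (1 - q ^ 2 * z ^ 2) ^ (-(1/2) : ℝ) * (1 - z ^ 2) ^ (-(1 / p))

section aux

variable {p q : ℝ}

lemma qz_pos (hq : q ∈ Ioo (0:ℝ) 1) {z : ℝ} (hz : z ∈ Ioo (0:ℝ) 1) :
    0 < 1 - q ^ 2 * z ^ 2 := by
  obtain ⟨hq0, hq1⟩ := hq; obtain ⟨hz0, hz1⟩ := hz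
  have h1 : q * z < 1 := by nlinarith
  nlinarith [mul_pos hq0 hz0]

lemma z_pos {z : ℝ} (hz : z ∈ Ioo (0:ℝ) 1) : 0 < 1 - z ^ 2 := by
  obtain ⟨hz0, hz1⟩ := hz; nlinarith

lemma QpW_contOn (hq : q ∈ Ioo (0:ℝ) 1) : ContinuousOn (QpW p q) (Ioo 0 1) := by
  apply ContinuousOn.mul
  · apply ContinuousOn.rpow_const (by fun_prop)
    intro z hz; exact Or.inl (qz_pos hq hz).ne'
  · apply ContinuousOn.rpow_const (by fun_prop)
    intro z hz; exact Or.inl (z_pos hz).ne'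

lemma QpW_pos (hq : q ∈ Ioo (0:ℝ) 1) {z : ℝ} (hz : z ∈ Ioo (0:ℝ) 1) :
    0 < QpW p q z :=
  mul_pos (Real.rpow_pos_of_pos (qz_pos hq hz) _) (Real.rpow_pos_of_pos (z_pos hz) _)

lemma one_le_QpW (hp : 1 < p) (hq : q ∈ Ioo (0:ℝ) 1) {z : ℝ} (hz : z ∈ Ioo (0:ℝ) 1) :
    1 ≤ QpW p q z := by
  have h1 : (1:ℝ) ≤ (1 - q ^ 2 * z ^ 2) ^ (-(1/2) : ℝ) :=
    Real.one_le_rpow_of_pos_of_le_one_of_nonpos (qz_pos hq hz)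
      (by nlinarith [hq.1, hz.1] : 1 - q ^ 2 * z ^ 2 ≤ 1) (by norm_num)
  have h2 : (1:ℝ) ≤ (1 - z ^ 2) ^ (-(1 / p)) :=
    Real.one_le_rpow_of_pos_of_le_one_of_nonpos (z_pos hz)
      (by nlinarith [hz.1] : 1 - z ^ 2 ≤ 1)
      (by have : 0 < p := by linarith
          have : 0 < 1 / p := by positivity
          linarith)
  calc (1:ℝ) = 1 * 1 := by norm_num
    _ ≤ _ := mul_le_mul h1 h2 zero_le_one (by linarith)

lemma integrableOn_QpW (hp : 1 < p) (hq : q ∈ Ioo (0:ℝ) 1) :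
    IntegrableOn (QpW p q) (Ioo 0 1) := by
  have hp0 : 0 < p := by linarith
  have hexp : (-1:ℝ) < -(1/p) := by
    have : 1 / p < 1 := by rw [div_lt_one hp0]; exact hp
    linarith
  have h1 : IntervalIntegrable (fun x : ℝ => x ^ (-(1/p))) volume 0 1 :=
    intervalIntegral.intervalIntegrable_rpow' hexp
  have h2 : IntervalIntegrable (fun x : ℝ => (1 - x) ^ (-(1/p))) volume 0 1 := by
    simpa using (h1.comp_sub_left 1).symm
  have h3 : IntegrableOn (fun x : ℝ => (1 - x) ^ (-(1/p))) (Ioo 0 1) :=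
    (intervalIntegrable_iff_integrableOn_Ioo_of_le zero_le_one).mp h2
  have hq2 : 0 < 1 - q ^ 2 := by nlinarith [hq.1, hq.2]
  refine (h3.const_mul ((1 - q ^ 2) ^ (-(1/2) : ℝ))).mono'
    ((QpW_contOn hq).aestronglyMeasurable measurableSet_Ioo) ?_
  filter_upwards [ae_restrict_mem measurableSet_Ioo] with z hz
  rw [Real.norm_of_nonneg (QpW_pos hq hz).le]
  apply mul_le_mul
  · exact Real.rpow_le_rpow_of_nonpos hq2
      (by nlinarith [mul_nonneg (sq_nonneg q) (z_pos hz).le]) (by norm_num)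
  · exact Real.rpow_le_rpow_of_nonpos (by linarith [hz.1, hz.2] : (0:ℝ) < 1 - z)
      (by nlinarith [hz.1, hz.2])
      (by have h0 : (0:ℝ) < 1 / p := by positivity
          linarith)
  · exact (Real.rpow_pos_of_pos (z_pos hz) _).le
  · exact (Real.rpow_pos_of_pos hq2 _).le

lemma integrableOn_mul_QpW (hp : 1 < p) (hq : q ∈ Ioo (0:ℝ) 1) {φ : ℝ → ℝ}
    (hφc : ContinuousOn φ (Ioo 0 1)) (hφ : ∀ z ∈ Ioo (0:ℝ) 1, |φ z| ≤ 1) :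
    IntegrableOn (fun z => φ z * QpW p q z) (Ioo 0 1) := by
  refine (integrableOn_QpW hp hq).mono'
    ((hφc.mul (QpW_contOn hq)).aestronglyMeasurable measurableSet_Ioo) ?_
  filter_upwards [ae_restrict_mem measurableSet_Ioo] with z hz
  have hw := (QpW_pos hq hz (p := p)).le
  rw [norm_mul, Real.norm_of_nonneg hw]
  calc |φ z| * QpW p q z ≤ 1 * QpW p q z :=
        mul_le_mul_of_nonneg_right (hφ z hz) hw
    _ = QpW p q z := one_mul _

lemma intervalIntegral_eq_Ioo (F : ℝ → ℝ) :
    ∫ z in (0:ℝ)..1, F z = ∫ z in Ioo (0:ℝ) 1, F z := by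
  rw [intervalIntegral.integral_of_le zero_le_one,
    MeasureTheory.integral_Ioc_eq_integral_Ioo]

lemma K1_pos (hp : 1 < p) (hq : q ∈ Ioo (0:ℝ) 1) : 0 < K1 p q := by
  rw [K1]
  apply intervalIntegral.intervalIntegral_pos_of_pos_on
  · rw [intervalIntegrable_iff_integrableOn_Ioo_of_le zero_le_one]
    exact integrableOn_QpW hp hq
  · intro z hz; exact QpW_pos hq hz
  · norm_num

lemma K1_eq : K1 p q = ∫ z in Ioo (0:ℝ) 1, QpW p q z := by
  rw [K1, intervalIntegral_eq_Ioo]; rfl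

lemma E1_eq (hq : q ∈ Ioo (0:ℝ) 1) :
    E1 p q = ∫ z in Ioo (0:ℝ) 1, (1 - q ^ 2 * z ^ 2) * QpW p q z := by
  rw [E1, intervalIntegral_eq_Ioo]
  refine setIntegral_congr_fun measurableSet_Ioo fun z hz => ?_
  have h := qz_pos hq hz
  rw [QpW, ← mul_assoc]
  congr 1
  rw [show ((1/2 : ℝ)) = 1 + -(1/2) by norm_num, Real.rpow_add h, Real.rpow_one]
  norm_num

end aux

set_option maxHeartbeats 1000000 in
theorem Qp_strictMono_in_p (p₁ p₂ : ℝ) (hp₁ : 1 < p₁) (hp₁₂ : p₁ < p₂) :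
    ∀ q ∈ Set.Ioo (0:ℝ) 1, Qp p₁ q < Qp p₂ q := by
  intro q hq
  have hp₂ : 1 < p₂ := hp₁.trans hp₁₂
  set c : ℝ := 1/p₁ - 1/p₂ with hc_def
  have hc : 0 < c := by
    have h : 1/p₂ < 1/p₁ := one_div_lt_one_div_of_lt (by linarith) hp₁₂
    simp only [hc_def]; linarith
  set f : ℝ → ℝ := fun z => 1 - q ^ 2 * z ^ 2 with hf_def
  set g : ℝ → ℝ := fun z => (1 - z ^ 2) ^ c with hg_def
  set w : ℝ → ℝ := QpW p₁ q with hw_def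
  set μ : Measure ℝ := volume.restrict (Ioo 0 1) with hμ
  -- bounds for f and g on Ioo
  have hf01 : ∀ z ∈ Ioo (0:ℝ) 1, 0 < f z ∧ f z ≤ 1 := fun z hz =>
    ⟨qz_pos hq hz, by have := hq.1; have := hz.1; simp only [hf_def]; nlinarith⟩
  have hg01 : ∀ z ∈ Ioo (0:ℝ) 1, 0 < g z ∧ g z ≤ 1 := fun z hz =>
    ⟨Real.rpow_pos_of_pos (z_pos hz) _,
     Real.rpow_le_one (z_pos hz).le (by nlinarith [hz.1, hz.2]) hc.le⟩
  have hfc : ContinuousOn f (Ioo 0 1) := by fun_prop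
  have hgc : ContinuousOn g (Ioo 0 1) := by
    apply ContinuousOn.rpow_const (by fun_prop)
    intro z hz; exact Or.inl (z_pos hz).ne'
  -- integral representations
  have hK₁ : K1 p₁ q = ∫ z, w z ∂μ := K1_eq
  have hE₁ : E1 p₁ q = ∫ z, f z * w z ∂μ := E1_eq hq
  have hK₂ : K1 p₂ q = ∫ z, g z * w z ∂μ := by
    rw [K1_eq, hμ]
    refine setIntegral_congr_fun measurableSet_Ioo fun z hz => ?_
    have h := z_pos hz
    simp only [hg_def, hw_def, QpW]
    rw [show (-(1/p₂) : ℝ) = c + -(1/p₁) by simp only [hc_def]; ring, Real.rpow_add h]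
    ring
  have hE₂ : E1 p₂ q = ∫ z, f z * g z * w z ∂μ := by
    rw [E1_eq hq, hμ]
    refine setIntegral_congr_fun measurableSet_Ioo fun z hz => ?_
    have h := z_pos hz
    simp only [hf_def, hg_def, hw_def, QpW]
    rw [show (-(1/p₂) : ℝ) = c + -(1/p₁) by simp only [hc_def]; ring, Real.rpow_add h]
    ring
  -- integrability
  have hw_int : Integrable w μ := integrableOn_QpW hp₁ hq
  have hfw_int : Integrable (fun z => f z * w z) μ :=
    integrableOn_mul_QpW hp₁ hq hfc fun z hz => by
      rw [abs_of_pos (hf01 z hz).1]; exact (hf01 z hz).2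
  have hgw_int : Integrable (fun z => g z * w z) μ :=
    integrableOn_mul_QpW hp₁ hq hgc fun z hz => by
      rw [abs_of_pos (hg01 z hz).1]; exact (hg01 z hz).2
  have hfgw_int : Integrable (fun z => f z * g z * w z) μ :=
    integrableOn_mul_QpW hp₁ hq (hfc.mul hgc) fun z hz => by
      rw [abs_of_pos (mul_pos (hf01 z hz).1 (hg01 z hz).1)]
      calc f z * g z ≤ 1 * 1 :=
            mul_le_mul (hf01 z hz).2 (hg01 z hz).2 (hg01 z hz).1.le zero_le_one
        _ = 1 := one_mul 1
  -- the double-integral (Chebyshev) identity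
  set H : ℝ × ℝ → ℝ :=
    fun zz => (f zz.1 - f zz.2) * (g zz.1 - g zz.2) * (w zz.1 * w zz.2) with hH_def
  have hid : H = fun zz : ℝ × ℝ =>
      (f zz.1 * g zz.1 * w zz.1 * w zz.2 + w zz.1 * (f zz.2 * g zz.2 * w zz.2))
      - (f zz.1 * w zz.1 * (g zz.2 * w zz.2) + g zz.1 * w zz.1 * (f zz.2 * w zz.2)) := by
    funext zz; simp only [hH_def]; ring
  have J1 : Integrable (fun zz : ℝ × ℝ => f zz.1 * g zz.1 * w zz.1 * w zz.2) (μ.prod μ) :=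
    hfgw_int.mul_prod hw_int
  have J2 : Integrable (fun zz : ℝ × ℝ => w zz.1 * (f zz.2 * g zz.2 * w zz.2)) (μ.prod μ) :=
    hw_int.mul_prod hfgw_int
  have J3 : Integrable (fun zz : ℝ × ℝ => f zz.1 * w zz.1 * (g zz.2 * w zz.2)) (μ.prod μ) :=
    hfw_int.mul_prod hgw_int
  have J4 : Integrable (fun zz : ℝ × ℝ => g zz.1 * w zz.1 * (f zz.2 * w zz.2)) (μ.prod μ) :=
    hgw_int.mul_prod hfw_int
  have J12 : Integrable (fun zz : ℝ × ℝ =>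
      f zz.1 * g zz.1 * w zz.1 * w zz.2 + w zz.1 * (f zz.2 * g zz.2 * w zz.2)) (μ.prod μ) :=
    J1.add J2
  have J34 : Integrable (fun zz : ℝ × ℝ =>
      f zz.1 * w zz.1 * (g zz.2 * w zz.2) + g zz.1 * w zz.1 * (f zz.2 * w zz.2)) (μ.prod μ) :=
    J3.add J4
  have hH_int : Integrable H (μ.prod μ) := by
    rw [hid]; exact J12.sub J34
  have I1 : ∫ zz : ℝ × ℝ, f zz.1 * g zz.1 * w zz.1 * w zz.2 ∂(μ.prod μ)
      = (∫ z, f z * g z * w z ∂μ) * ∫ z, w z ∂μ :=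
    integral_prod_mul (fun z => f z * g z * w z) w
  have I2 : ∫ zz : ℝ × ℝ, w zz.1 * (f zz.2 * g zz.2 * w zz.2) ∂(μ.prod μ)
      = (∫ z, w z ∂μ) * ∫ z, f z * g z * w z ∂μ :=
    integral_prod_mul w (fun z => f z * g z * w z)
  have I3 : ∫ zz : ℝ × ℝ, f zz.1 * w zz.1 * (g zz.2 * w zz.2) ∂(μ.prod μ)
      = (∫ z, f z * w z ∂μ) * ∫ z, g z * w z ∂μ :=
    integral_prod_mul (fun z => f z * w z) (fun z => g z * w z)
  have I4 : ∫ zz : ℝ × ℝ, g zz.1 * w zz.1 * (f zz.2 * w zz.2) ∂(μ.prod μ)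
      = (∫ z, g z * w z ∂μ) * ∫ z, f z * w z ∂μ :=
    integral_prod_mul (fun z => g z * w z) (fun z => f z * w z)
  have hprod : ∫ zz, H zz ∂(μ.prod μ)
      = 2 * ((∫ z, f z * g z * w z ∂μ) * (∫ z, w z ∂μ)
          - (∫ z, f z * w z ∂μ) * (∫ z, g z * w z ∂μ)) := by
    rw [hid, integral_sub J12 J34, integral_add J1 J2, integral_add J3 J4, I1, I2, I3, I4]
    ring
  -- H is a.e. nonnegative
  have hH_nonneg : 0 ≤ᵐ[μ.prod μ] H := by
    rw [hμ, Measure.prod_restrict]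
    filter_upwards [ae_restrict_mem (measurableSet_Ioo.prod measurableSet_Ioo)] with zz hzz
    obtain ⟨hz1, hz2⟩ := hzz
    have hwpos := mul_pos (QpW_pos hq hz1 (p := p₁)) (QpW_pos hq hz2 (p := p₁))
    have hgmono : ∀ x ∈ Ioo (0:ℝ) 1, ∀ y ∈ Ioo (0:ℝ) 1, x ≤ y → g y ≤ g x := by
      intro x hx y hy hxy
      exact Real.rpow_le_rpow (z_pos hy).le (by nlinarith [hx.1, hy.1]) hc.le
    have hfmono : ∀ x y : ℝ, x ≤ y → 0 ≤ x → f y ≤ f x := by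
      intro x y hxy hx
      simp only [hf_def]
      nlinarith [mul_nonneg (sq_nonneg q)
        (mul_nonneg (sub_nonneg.2 hxy) (by linarith : (0:ℝ) ≤ y + x))]
    rcases le_total zz.1 zz.2 with hle | hle
    · have h1 : f zz.2 ≤ f zz.1 := hfmono _ _ hle hz1.1.le
      have h2 : g zz.2 ≤ g zz.1 := hgmono _ hz1 _ hz2 hle
      simp only [hH_def, Pi.zero_apply]
      exact mul_nonneg (mul_nonneg (by linarith) (by linarith)) hwpos.le
    · have h1 : f zz.1 ≤ f zz.2 := hfmono _ _ hle hz2.1.le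
      have h2 : g zz.1 ≤ g zz.2 := hgmono _ hz2 _ hz1 hle
      simp only [hH_def, Pi.zero_apply]
      have := mul_nonneg (sub_nonneg.2 h1) (sub_nonneg.2 h2)
      nlinarith [hwpos.le]
  -- the double integral is strictly positive: lower bound on a box
  set B : Set (ℝ × ℝ) := Icc (1/8:ℝ) (1/4) ×ˢ Icc (1/2:ℝ) (3/4) with hB_def
  have hBsub : B ⊆ Ioo (0:ℝ) 1 ×ˢ Ioo (0:ℝ) 1 := by
    rintro ⟨x, y⟩ ⟨hx, hy⟩
    exact ⟨⟨by linarith [hx.1], by linarith [hx.2]⟩, ⟨by linarith [hy.1], by linarith [hy.2]⟩⟩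
  have hBmeas : MeasurableSet B := measurableSet_Icc.prod measurableSet_Icc
  have hrestrict : (μ.prod μ).restrict B
      = ((volume : Measure ℝ).prod (volume : Measure ℝ)).restrict B := by
    rw [hμ, Measure.prod_restrict, Measure.restrict_restrict_of_subset hBsub]
  have hBvol : ((volume : Measure ℝ).prod (volume : Measure ℝ)) B = ENNReal.ofReal (1/32) := by
    rw [hB_def, Measure.prod_prod, Real.volume_Icc, Real.volume_Icc,
      ← ENNReal.ofReal_mul (by norm_num)]
    norm_num
  set δg : ℝ := (15/16:ℝ) ^ c - (3/4:ℝ) ^ c with hδg_def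
  have hδg : 0 < δg := by
    have := Real.rpow_lt_rpow (x := (3/4:ℝ)) (y := (15/16:ℝ)) (by norm_num) (by norm_num) hc
    simp only [hδg_def]; linarith
  set δ : ℝ := 3/16 * q ^ 2 * δg with hδ_def
  have hδ : 0 < δ := mul_pos (mul_pos (by norm_num) (pow_pos hq.1 2)) hδg
  have hlower : ∀ zz ∈ B, δ ≤ H zz := by
    rintro ⟨x, y⟩ hzz
    obtain ⟨hx, hy⟩ := hzz
    obtain ⟨hx1, hy1⟩ := hBsub ⟨hx, hy⟩
    have ha : 3/16 * q ^ 2 ≤ f x - f y := by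
      have h1 : (3:ℝ)/16 ≤ y ^ 2 - x ^ 2 := by nlinarith [hx.1, hx.2, hy.1, hy.2]
      simp only [hf_def]
      nlinarith [mul_le_mul_of_nonneg_left h1 (sq_nonneg q)]
    have hb : δg ≤ g x - g y := by
      have hgx : (15/16:ℝ) ^ c ≤ g x :=
        Real.rpow_le_rpow (by norm_num) (by nlinarith [hx.1, hx.2]) hc.le
      have hgy : g y ≤ (3/4:ℝ) ^ c :=
        Real.rpow_le_rpow (z_pos hy1).le (by nlinarith [hy.1, hy.2]) hc.le
      simp only [hδg_def]; linarith
    have hu : 1 ≤ w x := one_le_QpW hp₁ hq hx1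
    have hv : 1 ≤ w y := one_le_QpW hp₁ hq hy1
    have ha0 : (0:ℝ) ≤ 3/16 * q ^ 2 := by positivity
    have hab : 3/16 * q ^ 2 * δg ≤ (f x - f y) * (g x - g y) :=
      mul_le_mul ha hb hδg.le (ha0.trans ha)
    have hab0 : (0:ℝ) ≤ (f x - f y) * (g x - g y) := le_trans hδ.le hab
    have huv : (1:ℝ) ≤ w x * w y := by nlinarith
    have hfin : δ ≤ (f x - f y) * (g x - g y) * (w x * w y) := by
      rw [hδ_def]
      nlinarith [mul_le_mul_of_nonneg_left huv hab0]
    simpa [hH_def] using hfin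
  have hstep : δ * (1/32) ≤ ∫ zz in B, H zz ∂(μ.prod μ) := by
    rw [hrestrict]
    have hint : IntegrableOn H B ((volume : Measure ℝ).prod volume) := by
      have := hH_int.restrict (s := B)
      rwa [hrestrict] at this
    have := setIntegral_ge_of_const_le_real (μ := (volume : Measure ℝ).prod volume)
      hBmeas (by rw [hBvol]; exact ENNReal.ofReal_ne_top) hlower hint
    rwa [measureReal_def, hBvol, ENNReal.toReal_ofReal (by norm_num)] at this
  have hposint : 0 < ∫ zz, H zz ∂(μ.prod μ) :=
    lt_of_lt_of_le (by positivity) (hstep.trans (setIntegral_le_integral hH_int hH_nonneg))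
  -- conclude
  have hkey : (∫ z, f z * w z ∂μ) * (∫ z, g z * w z ∂μ)
      < (∫ z, f z * g z * w z ∂μ) * (∫ z, w z ∂μ) := by
    rw [hprod] at hposint; linarith
  have hK1pos : 0 < K1 p₁ q := K1_pos hp₁ hq
  have hK2pos : 0 < K1 p₂ q := K1_pos hp₂ hq
  have hEK : E1 p₁ q * K1 p₂ q < E1 p₂ q * K1 p₁ q := by
    rw [hE₁, hK₂, hE₂, hK₁]; linarith
  have hdiv : 2 * E1 p₁ q / K1 p₁ q < 2 * E1 p₂ q / K1 p₂ q := by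
    rw [div_lt_div_iff₀ hK1pos hK2pos]; nlinarith
  simp only [Qp]; linarith
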